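/- There exist exactly 5 complex numbers a such that the polynomial f(x,y,z) = 1 + x + y + x²·y²·z⁵ + a·x·y·z² has a singular point in (ℂ ∖ {0})³. -/

import Mathlib

open MvPolynomial

noncomputable section

/-- `p` is a singular point of `h` lying in the torus `(ℂ ∖ {0})³`. -/
def SingularAt3 (h : MvPolynomial (Fin 3) ℂ) (p : Fin 3 → ℂ) : Prop :=
  (∀ i, p i ≠ 0) ∧ eval p h = 0 ∧ ∀ i : Fin 3, eval p (pderiv i h) = 0

theorem circuitB_count_2_2_5 :
    {a : ℂ | ∃ p : Fin 3 → ℂ,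
      SingularAt3 (1 + X 0 + X 1 + X 0 ^ 2 * X 1 ^ 2 * X 2 ^ 5 +
        C a * (X 0 * X 1 * X 2 ^ 2)) p}.ncard = 5 := by
  have hset : {a : ℂ | ∃ p : Fin 3 → ℂ,
      SingularAt3 (1 + X 0 + X 1 + X 0 ^ 2 * X 1 ^ 2 * X 2 ^ 5 +
        C a * (X 0 * X 1 * X 2 ^ 2)) p}
      = (fun z : ℂ => -5 * z ^ 3 / 2) '' {z : ℂ | z ^ 5 = 2} := by
    ext a
    constructor
    · rintro ⟨p, hp0, hf, hd⟩
      have hx0 : p 0 ≠ 0 := hp0 0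
      have hy0 : p 1 ≠ 0 := hp0 1
      have hz0 : p 2 ≠ 0 := hp0 2
      have hE0 := hd 0
      have hE1 := hd 1
      have hE2 := hd 2
      simp [pderiv_X, Pi.single_apply] at hf hE0 hE1 hE2
      -- hf : 1 + p 0 + p 1 + p 0^2 * p 1^2 * p 2^5 + a*(p 0 * p 1 * p 2^2) = 0
      -- hE0 : 1 + p 2^5 * (p 1^2 * (2 * p 0)) + a * (p 2^2 * p 1) = 0
      -- hE1 : 1 + p 2^5 * (p 0^2 * (2 * p 1)) + a * (p 2^2 * p 0) = 0
      -- hE2 : p 0^2 * p 1^2 * (5 * p 2^4) + a * (p 0 * p 1 * (2 * p 2)) = 0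
      have hxy : p 0 = p 1 := by linear_combination p 0 * hE0 - p 1 * hE1
      have key : p 0 ^ 2 * p 2 * (5 * p 0 ^ 2 * p 2 ^ 3 + 2 * a) = 0 := by
        linear_combination hE2 +
          (5 * p 0 ^ 2 * p 2 ^ 4 * (p 0 + p 1) + 2 * a * p 0 * p 2) * hxy
      have h2 : 5 * p 0 ^ 2 * p 2 ^ 3 + 2 * a = 0 :=
        (mul_eq_zero.mp key).resolve_left (mul_ne_zero (pow_ne_zero 2 hx0) hz0)
      have hxz : p 0 ^ 3 * p 2 ^ 5 = 2 := by
        linear_combination (-2 : ℂ) * hE0 + p 0 * p 2 ^ 2 * h2 -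
          (4 * p 0 * p 2 ^ 5 * (p 0 + p 1) + 2 * a * p 2 ^ 2) * hxy
      have hx1 : p 0 = 1 := by
        linear_combination (-1 : ℂ) * hf + (p 0 ^ 2 * p 2 ^ 2 / 2) * h2 -
          (3 * p 0 / 2) * hxz +
          (-1 - p 0 ^ 2 * p 2 ^ 5 * (p 0 + p 1) - a * p 0 * p 2 ^ 2) * hxy
      refine ⟨p 2, ?_, ?_⟩
      · show p 2 ^ 5 = 2
        linear_combination hxz - (p 2 ^ 5 * (p 0 ^ 2 + p 0 + 1)) * hx1
      · show -5 * p 2 ^ 3 / 2 = a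
        linear_combination (-1 / 2 : ℂ) * h2 + (5 / 2 * p 2 ^ 3 * (p 0 + 1)) * hx1
    · rintro ⟨z, hz, rfl⟩
      have hz' : z ^ 5 = 2 := hz
      have hz0 : z ≠ 0 := by
        intro h; rw [h] at hz'; norm_num at hz'
      refine ⟨![1, 1, z], ?_, ?_, ?_⟩
      · intro i
        fin_cases i <;> simp [hz0]
      · simp [Fin.ext_iff]
        field_simp
        first
        | ring1
        | linear_combination hz'
        | linear_combination (-1 : ℂ) * hz'
        | linear_combination (3 : ℂ) * hz'
        | linear_combination (-3 : ℂ) * hz'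
      · intro i
        fin_cases i <;>
        · simp [pderiv_X, Pi.single_apply, Fin.ext_iff]
          field_simp
          first
          | ring1
          | linear_combination hz'
          | linear_combination (-1 : ℂ) * hz'
          | linear_combination (3 : ℂ) * hz'
          | linear_combination (-3 : ℂ) * hz'
  rw [hset]
  have hroots : {z : ℂ | z ^ 5 = 2}.ncard = 5 := by
    have hζ : IsPrimitiveRoot (Complex.exp (2 * Real.pi * Complex.I / 5)) 5 :=
      Complex.isPrimitiveRoot_exp 5 (by norm_num)
    have hnodup : (Polynomial.nthRoots 5 (2 : ℂ)).Nodup :=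
      hζ.nthRoots_nodup (by norm_num)
    have hcard : Multiset.card (Polynomial.nthRoots 5 (2 : ℂ)) = 5 := by
      rw [hζ.card_nthRoots]
      rw [if_pos]
      obtain ⟨α, hα⟩ := IsAlgClosed.exists_pow_nat_eq (2 : ℂ) (n := 5) (by norm_num)
      exact ⟨α, hα⟩
    have hsetroots : {z : ℂ | z ^ 5 = 2} = ↑(Polynomial.nthRoots 5 (2 : ℂ)).toFinset := by
      ext z
      simp [Polynomial.mem_nthRoots (by norm_num : 0 < 5)]
    rw [hsetroots, Set.ncard_coe_finset, Multiset.toFinset_card_of_nodup hnodup, hcard]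
  rw [Set.ncard_image_of_injOn, hroots]
  intro z1 h1 z2 h2 heq
  simp only [Set.mem_setOf_eq] at h1 h2
  have hz1 : z1 ≠ 0 := by intro h; rw [h] at h1; norm_num at h1
  have hcube : z1 ^ 3 = z2 ^ 3 := by
    field_simp at heq
    exact neg_inj.mp heq
  have : z1 ^ 6 = z2 ^ 6 := by
    have := congrArg (· ^ 2) hcube
    simpa [← pow_mul] using this
  calc z1 = z1 ^ 6 / z1 ^ 5 := by field_simp
    _ = z2 ^ 6 / z2 ^ 5 := by rw [this, h1, h2]
    _ = z2 := by
        have hz2 : z2 ≠ 0 := by intro h; rw [h] at h2; norm_num at h2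
        field_simp

end
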